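/- For every m, the Goodstein sequence defined by m_0 = m and m_{l+1} = m_l[l+3←l+4] - 1 (and m_{l+1}=0 if m_l=0) terminates: there exists l with m_l = 0. -/

import Mathlib

/-- The parametrized Ackermann function: `A a k b` is `A_a(k,b)`. -/
def A : ℕ → ℕ → ℕ → ℕ
  | 0, _, b => b + 1
  | a+1, k, 0 => (fun x => A a k x)^[k] 0
  | a+1, k, b+1 => (fun x => A a k x)^[k] (A (a+1) k b)
  termination_by a _ b => (a, b)

theorem A_zero (k b : ℕ) : A 0 k b = b + 1 := by rw [A]

theorem A_succ_zero (a k : ℕ) : A (a+1) k 0 = (fun x => A a k x)^[k] 0 := by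
  rw [A]

theorem A_succ_succ (a k b : ℕ) : A (a+1) k (b+1) = (fun x => A a k x)^[k] (A (a+1) k b) := by
  rw [A]

-- generic iterate facts
theorem iter_lt {f : ℕ → ℕ} (hf : ∀ x, x < f x) {n : ℕ} (hn : 1 ≤ n) (x : ℕ) :
    x < f^[n] x := by
  induction n with
  | zero => omega
  | succ n ih =>
    rcases Nat.eq_zero_or_pos n with h | h
    · subst h; simpa using hf x
    · rw [Function.iterate_succ_apply']
      exact lt_of_lt_of_le (ih h) (le_of_lt (hf _))

theorem iter_le_self {f : ℕ → ℕ} (hf : ∀ x, x < f x) (n x : ℕ) : x ≤ f^[n] x := by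
  cases n with
  | zero => simp
  | succ n => exact le_of_lt (iter_lt hf (by omega) x)

/-- expansivity: `b < A a k b` for `k ≥ 1`. -/
theorem lt_A (hk : 1 ≤ k) : ∀ a b, b < A a k b := by
  intro a
  induction a with
  | zero => intro b; rw [A_zero]; omega
  | succ a ih =>
    intro b
    induction b with
    | zero =>
      rw [A_succ_zero]
      exact iter_lt ih hk 0
    | succ b ihb =>
      rw [A_succ_succ]
      calc b + 1 ≤ A (a+1) k b := ihb
        _ < (fun x => A a k x)^[k] (A (a+1) k b) := iter_lt ih hk _

theorem A_pos (hk : 1 ≤ k) (a b : ℕ) : 0 < A a k b := Nat.lt_of_le_of_lt (Nat.zero_le _) (lt_A hk a b)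

/-- strict monotonicity in `b`. -/
theorem A_lt_succ_b (hk : 1 ≤ k) (a b : ℕ) : A a k b < A a k (b+1) := by
  cases a with
  | zero => rw [A_zero, A_zero]; omega
  | succ a => rw [A_succ_succ]; exact iter_lt (lt_A hk a) hk _

theorem A_strictMono_b (hk : 1 ≤ k) (a : ℕ) : StrictMono (fun b => A a k b) :=
  strictMono_nat_of_lt_succ (fun b => A_lt_succ_b hk a b)

theorem A_mono_b (hk : 1 ≤ k) {a b b' : ℕ} (h : b ≤ b') : A a k b ≤ A a k b' :=
  (A_strictMono_b hk a).monotone h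

theorem A_lt_b (hk : 1 ≤ k) {a b b' : ℕ} (h : b < b') : A a k b < A a k b' :=
  A_strictMono_b hk a h

theorem A_reflect_b (hk : 1 ≤ k) {a b b' : ℕ} (h : A a k b < A a k b') : b < b' :=
  (A_strictMono_b hk a).lt_iff_lt.mp h

theorem A_le_reflect_b (hk : 1 ≤ k) {a b b' : ℕ} (h : A a k b ≤ A a k b') : b ≤ b' :=
  (A_strictMono_b hk a).le_iff_le.mp h

theorem iter_le_iter {f g : ℕ → ℕ} (hfg : ∀ x, f x ≤ g x) (hg : Monotone g)
    {x y : ℕ} (hxy : x ≤ y) (n : ℕ) : f^[n] x ≤ g^[n] y := by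
  induction n with
  | zero => simpa using hxy
  | succ n ih =>
    rw [Function.iterate_succ_apply', Function.iterate_succ_apply']
    exact le_trans (hfg _) (hg ih)

/-- monotonicity in `a`. -/
theorem A_le_succ_a (hk : 1 ≤ k) (a b : ℕ) : A a k b ≤ A (a+1) k b := by
  obtain ⟨j, rfl⟩ : ∃ j, k = j + 1 := ⟨k - 1, by omega⟩
  induction b with
  | zero =>
    rw [A_succ_zero, Function.iterate_succ_apply]
    exact le_trans (le_refl _) (by
      have : A a (j+1) 0 ≤ (fun x => A a (j+1) x)^[j] (A a (j+1) 0) := iter_le_self (lt_A hk a) _ _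
      simpa using this)
  | succ b ih =>
    rw [A_succ_succ, Function.iterate_succ_apply']
    have h1 : b + 1 ≤ (fun x => A a (j+1) x)^[j] (A (a+1) (j+1) b) :=
      le_trans (lt_A hk (a+1) b) (iter_le_self (lt_A hk a) _ _)
    exact A_mono_b hk h1

theorem A_mono_a (hk : 1 ≤ k) {a a' : ℕ} (h : a ≤ a') (b : ℕ) : A a k b ≤ A a' k b := by
  induction a', h using Nat.le_induction with
  | base => exact le_refl _
  | succ a' _ ih => exact le_trans ih (A_le_succ_a hk a' b)

/-- monotonicity in `k`. -/
theorem A_mono_k (hk : 1 ≤ k) (a : ℕ) : ∀ b, A a k b ≤ A a (k+1) b := by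
  induction a with
  | zero => intro b; rw [A_zero, A_zero]
  | succ a ih =>
    have hmono : Monotone (fun x => A a (k+1) x) := (A_strictMono_b (by omega) a).monotone
    have key : ∀ x y : ℕ, x ≤ y →
        (fun x => A a k x)^[k] x ≤ (fun x => A a (k+1) x)^[k+1] y := by
      intro x y hxy
      calc (fun x => A a k x)^[k] x ≤ (fun x => A a (k+1) x)^[k] y :=
            iter_le_iter (fun z => ih z) hmono hxy k
        _ ≤ (fun x => A a (k+1) x)^[k+1] y := by
            rw [Function.iterate_succ_apply']
            exact le_of_lt (lt_A (by omega) a _)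
    intro b
    induction b with
    | zero => rw [A_succ_zero, A_succ_zero]; exact key 0 0 (le_refl _)
    | succ b ihb => rw [A_succ_succ, A_succ_succ]; exact key _ _ ihb

theorem sm_gap {f : ℕ → ℕ} (hf : StrictMono f) {x y : ℕ} (h : x ≤ y) : f x + y ≤ f y + x := by
  induction y with
  | zero => have : x = 0 := by omega
            subst this; omega
  | succ y ih =>
    rcases Nat.lt_or_ge x (y+1) with h' | h'
    · have h1 := ih (by omega)
      have h2 : f y < f (y+1) := hf (by omega)
      omega
    · have : x = y + 1 := by omega
      subst this; omega

/-- the gap `A a k (b+1) - A a k b`. -/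
def gp (a k b : ℕ) : ℕ := A a k (b+1) - A a k b

theorem gp_add (hk : 1 ≤ k) (a b : ℕ) : A a k b + gp a k b = A a k (b+1) := by
  have := A_lt_succ_b hk a b
  unfold gp; omega

theorem gp_mono_b (hk : 1 ≤ k) (a : ℕ) {b b' : ℕ} (h : b ≤ b') : gp a k b ≤ gp a k b' := by
  have key : A a k (b+1) + A a k b' ≤ A a k b + A a k (b'+1) := by
    cases a with
    | zero => rw [A_zero, A_zero, A_zero, A_zero]; omega
    | succ a =>
      rw [A_succ_succ, A_succ_succ]
      have h0 : A (a+1) k b ≤ A (a+1) k b' := A_mono_b hk h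
      have := sm_gap ((A_strictMono_b hk a).iterate k) h0
      omega
  have h1 := gp_add hk a b
  have h2 := gp_add hk a b'
  omega

theorem gp_mono_a (hk : 1 ≤ k) (a b : ℕ) : gp a k b ≤ gp (a+1) k b := by
  have key : A a k (b+1) + A (a+1) k b ≤ A a k b + A (a+1) k (b+1) := by
    set x := A (a+1) k b with hx
    have hbx : b + 1 ≤ x := lt_A hk (a+1) b
    have hx1 : 1 ≤ x := by omega
    -- Gb at level a, from b to x-1
    have h1 : gp a k b ≤ gp a k (x-1) := gp_mono_b hk a (by omega)
    have h2 : x ≤ A a k (x-1) := by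
      have := lt_A hk a (x-1); omega
    have h3 : A a k x ≤ (fun z => A a k z)^[k] x := by
      obtain ⟨j, rfl⟩ : ∃ j, k = j + 1 := ⟨k - 1, by omega⟩
      rw [Function.iterate_succ_apply]
      exact iter_le_self (lt_A hk a) _ _
    have h4 : A a k (x-1) + gp a k (x-1) = A a k ((x-1)+1) := gp_add hk a (x-1)
    have h5 : (x-1) + 1 = x := by omega
    rw [h5] at h4
    have h6 := gp_add hk a b
    rw [A_succ_succ, ← hx]
    omega
  have h1 := gp_add hk a b
  have h2 := gp_add hk (a+1) b
  omega

theorem gp_mono_k (hk : 1 ≤ k) (a b : ℕ) : gp a k b ≤ gp a (k+1) b := by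
  have key : A a k (b+1) + A a (k+1) b ≤ A a k b + A a (k+1) (b+1) := by
    cases a with
    | zero => rw [A_zero, A_zero, A_zero, A_zero]; omega
    | succ a =>
      rw [A_succ_succ, A_succ_succ]
      set x := A (a+1) k b with hx
      set y := A (a+1) (k+1) b with hy
      have hxy : x ≤ y := A_mono_k hk (a+1) b
      have h1 : (fun z => A a k z)^[k] x ≤ (fun z => A a (k+1) z)^[k] x :=
        iter_le_iter (fun z => A_mono_k hk a z) ((A_strictMono_b (by omega) a).monotone)
          (le_refl x) k
      have h2 : (fun z => A a (k+1) z)^[k] x ≤ (fun z => A a (k+1) z)^[k+1] x := by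
        rw [Function.iterate_succ_apply']
        exact le_of_lt (lt_A (by omega) a _)
      have h3 : (fun z => A a (k+1) z)^[k+1] x + y ≤ (fun z => A a (k+1) z)^[k+1] y + x :=
        sm_gap ((A_strictMono_b (by omega : (1:ℕ) ≤ k+1) a).iterate (k+1)) hxy
      omega
  have h1 := gp_add hk a b
  have h2 := gp_add (by omega : (1:ℕ) ≤ k+1) a b
  omega

theorem gp_full (hk : 1 ≤ k) {a a' b b' : ℕ} (ha : a ≤ a') (hb : b ≤ b') :
    gp a k b ≤ gp a' (k+1) b' := by
  have h1 : gp a k b ≤ gp a' k b := by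
    induction a', ha using Nat.le_induction with
    | base => exact le_refl _
    | succ a' _ ih => exact le_trans ih (gp_mono_a hk a' b)
  exact le_trans h1 (le_trans (gp_mono_k hk a' b) (gp_mono_b (by omega) a' hb))

theorem A_zero_lt_succ (hk : 2 ≤ k) (a : ℕ) : A a k 0 < A (a+1) k 0 := by
  rw [A_succ_zero]
  obtain ⟨j, rfl⟩ : ∃ j, k = j + 1 := ⟨k - 1, by omega⟩
  rw [Function.iterate_succ_apply]
  exact iter_lt (lt_A (by omega) a) (by omega) _

theorem A_zero_ge (hk : 2 ≤ k) (a : ℕ) : a + 1 ≤ A a k 0 := by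
  induction a with
  | zero => rw [A_zero]
  | succ a ih => exact lt_of_le_of_lt ih (A_zero_lt_succ hk a)

/-- `m = A_a(k,b) + l` is the `k`-normal form of `m`: `a` is maximal with
`A_a(k,0) ≤ m` and `b` is maximal with `A_a(k,b) ≤ m`. -/
def IsNF (k m a b l : ℕ) : Prop :=
  m = A a k b + l ∧ A a k 0 ≤ m ∧
  (∀ a', A a' k 0 ≤ m → a' ≤ a) ∧
  (∀ b', A a k b' ≤ m → b' ≤ b)

def aOf (k m : ℕ) : ℕ := Nat.findGreatest (fun a => A a k 0 ≤ m) (m - 1)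
def bOf (k m : ℕ) : ℕ := Nat.findGreatest (fun b => A (aOf k m) k b ≤ m) (m - 1)
def lOf (k m : ℕ) : ℕ := m - A (aOf k m) k (bOf k m)

theorem IsNF_exists (hk : 2 ≤ k) {m : ℕ} (hm : 0 < m) :
    IsNF k m (aOf k m) (bOf k m) (lOf k m) := by
  have h0 : A 0 k 0 ≤ m := by rw [A_zero]; omega
  have haP : A (aOf k m) k 0 ≤ m :=
    Nat.findGreatest_spec (P := fun a => A a k 0 ≤ m) (Nat.zero_le _) h0
  have hmaxa : ∀ a', A a' k 0 ≤ m → a' ≤ aOf k m := by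
    intro a' ha'
    have := A_zero_ge hk a'
    exact Nat.le_findGreatest (by omega) ha'
  have hbP : A (aOf k m) k (bOf k m) ≤ m :=
    Nat.findGreatest_spec (P := fun b => A (aOf k m) k b ≤ m) (Nat.zero_le _) haP
  have hmaxb : ∀ b', A (aOf k m) k b' ≤ m → b' ≤ bOf k m := by
    intro b' hb'
    have := lt_A (by omega : 1 ≤ k) (aOf k m) b'
    exact Nat.le_findGreatest (by omega) hb'
  exact ⟨by unfold lOf; omega, haP, hmaxa, hmaxb⟩

theorem IsNF_unique {k m a b l a' b' l' : ℕ} (h : IsNF k m a b l) (h' : IsNF k m a' b' l') :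
    a = a' ∧ b = b' ∧ l = l' := by
  obtain ⟨he, ha0, hma, hmb⟩ := h
  obtain ⟨he', ha0', hma', hmb'⟩ := h'
  have haa : a = a' := le_antisymm (hma' a ha0) (hma a' ha0')
  subst haa
  have hbb : b = b' := le_antisymm (hmb' b (by omega)) (hmb b' (by omega))
  subst hbb
  exact ⟨rfl, rfl, by omega⟩

theorem IsNF_comp (hk : 2 ≤ k) {m a b l : ℕ} (h : IsNF k m a b l) :
    aOf k m = a ∧ bOf k m = b ∧ lOf k m = l := by
  have hm : 0 < m := lt_of_lt_of_le (A_pos (by omega) a b) (le_trans (Nat.le_add_right _ _) h.1.ge)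
  obtain ⟨h1, h2, h3⟩ := IsNF_unique (IsNF_exists hk hm) h
  exact ⟨h1, h2, h3⟩

theorem IsNF_lt_a (hk : 1 ≤ k) {m a b l : ℕ} (h : IsNF k m a b l) : m < A (a+1) k 0 := by
  by_contra hc
  have := h.2.2.1 (a+1) (by omega)
  omega

theorem IsNF_lt_b (hk : 1 ≤ k) {m a b l : ℕ} (h : IsNF k m a b l) : m < A a k (b+1) := by
  by_contra hc
  have := h.2.2.2 (b+1) (by omega)
  omega

theorem IsNF_l_lt_gp (hk : 1 ≤ k) {m a b l : ℕ} (h : IsNF k m a b l) : l < gp a k b := by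
  have h1 := IsNF_lt_b hk h
  have h2 := gp_add hk a b
  have h3 := h.1
  omega

theorem IsNF_A (hk : 1 ≤ k) {m a b l : ℕ} (h : IsNF k m a b l) : IsNF k (A a k b) a b 0 := by
  obtain ⟨he, ha0, hma, hmb⟩ := h
  refine ⟨by omega, A_mono_b hk (Nat.zero_le b), ?_, ?_⟩
  · intro a' ha'; exact hma a' (by omega)
  · intro b' hb'; exact hmb b' (by omega)

theorem iter_count_mono {f : ℕ → ℕ} (hf : ∀ x, x < f x) {j n : ℕ} (h : j ≤ n) (x : ℕ) :
    f^[j] x ≤ f^[n] x := by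
  induction n, h using Nat.le_induction with
  | base => exact le_refl _
  | succ n _ ih =>
    rw [Function.iterate_succ_apply']
    exact le_trans ih (le_of_lt (hf _))

theorem A_iter_succ (a k x j : ℕ) :
    (fun y => A a k y)^[j+1] x = A a k ((fun y => A a k y)^[j] x) :=
  Function.iterate_succ_apply' _ _ _

/-- the hereditary base change function. -/
def bc (k : ℕ) : ℕ → ℕ
  | 0 => 0
  | (m+1) => A (bc k (aOf k (m+1))) (k+1) (bc k (bOf k (m+1))) + lOf k (m+1)
  decreasing_by
  · have : aOf k (m+1) ≤ m := Nat.findGreatest_le _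
    omega
  · have : bOf k (m+1) ≤ m := Nat.findGreatest_le _
    omega

theorem bc_zero (k : ℕ) : bc k 0 = 0 := by rw [bc]

theorem bc_def {k m : ℕ} (hm : 0 < m) :
    bc k m = A (bc k (aOf k m)) (k+1) (bc k (bOf k m)) + lOf k m := by
  cases m with
  | zero => omega
  | succ m => rw [bc]

theorem bc_NF (hk : 2 ≤ k) {m a b l : ℕ} (h : IsNF k m a b l) :
    bc k m = A (bc k a) (k+1) (bc k b) + l := by
  have hm : 0 < m := lt_of_lt_of_le (A_pos (by omega) a b) (le_trans (Nat.le_add_right _ _) h.1.ge)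
  obtain ⟨h1, h2, h3⟩ := IsNF_comp hk h
  rw [bc_def hm, h1, h2, h3]

theorem IsNF_a_lt (hk : 2 ≤ k) {m a b l : ℕ} (h : IsNF k m a b l) : a < m :=
  lt_of_lt_of_le (A_zero_ge hk a) h.2.1

theorem IsNF_b_lt (hk : 2 ≤ k) {m a b l : ℕ} (h : IsNF k m a b l) : b < m :=
  lt_of_lt_of_le (lt_A (show 1 ≤ k by omega) a b) (by have := h.1; omega)

/-- base change is inflationary. -/
theorem bc_le (hk : 2 ≤ k) : ∀ m, m ≤ bc k m := by
  intro m
  induction m using Nat.strong_induction_on with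
  | _ m ih =>
    rcases Nat.eq_zero_or_pos m with h | h
    · omega
    · have hnf := IsNF_exists hk h
      set a := aOf k m; set b := bOf k m; set l := lOf k m
      have hbc := bc_NF hk hnf
      have ha := ih a (IsNF_a_lt hk hnf)
      have hb := ih b (IsNF_b_lt hk hnf)
      have : A a k b ≤ A (bc k a) (k+1) (bc k b) :=
        le_trans (A_mono_a (by omega) ha b)
          (le_trans (A_mono_b (by omega) hb) (A_mono_k (by omega) _ _))
      have hm := hnf.1
      omega

/-- gap transfer: the crucial bound on `l` in base `k+1`. -/
theorem bc_lt_gap (hk : 2 ≤ k) {m a b l : ℕ} (h : IsNF k m a b l) :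
    bc k m < A (bc k a) (k+1) (bc k b + 1) := by
  have h1 : l < gp a k b := IsNF_l_lt_gp (by omega) h
  have h2 : gp a k b ≤ gp (bc k a) (k+1) (bc k b) :=
    gp_full (by omega) (bc_le hk a) (bc_le hk b)
  have h3 := gp_add (by omega : (1:ℕ) ≤ k+1) (bc k a) (bc k b)
  have h4 := bc_NF hk h
  omega

theorem A_succ_zero' (hk : 1 ≤ k) (a : ℕ) :
    A (a+1) k 0 = A a k ((fun x => A a k x)^[k-1] 0) := by
  obtain ⟨j, rfl⟩ : ∃ j, k = j + 1 := ⟨k - 1, by omega⟩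
  rw [A_succ_zero]
  simpa using A_iter_succ a (j+1) 0 j

theorem master (hk : 2 ≤ k) : ∀ N : ℕ,
    (∀ p q, q ≤ N → p < q → bc k p < bc k q) ∧
    (∀ n a b l, n ≤ N → IsNF k n a b l → bc k n < A (bc k a + 1) (k+1) 0) ∧
    (∀ d c j, d ≤ N → c ≤ N → j + 1 ≤ k → d < (fun x => A c k x)^[j] 0 →
      bc k d < (fun x => A (bc k c) (k+1) x)^[j+1] 0) := by
  intro N
  induction N using Nat.strong_induction_on with
  | _ N IH =>
    have mono : ∀ p q, q ≤ N → p < q → bc k p < bc k q := by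
      intro p q hqN hpq
      rcases Nat.eq_zero_or_pos p with hp | hp
      · subst hp
        rw [bc_zero]
        exact lt_of_lt_of_le hpq (bc_le hk q)
      · have hq : 0 < q := by omega
        obtain ⟨a, b, l, hnfp⟩ : ∃ a b l, IsNF k p a b l := ⟨_, _, _, IsNF_exists hk hp⟩
        obtain ⟨e, f, j0, hnfq⟩ : ∃ e f j0, IsNF k q e f j0 := ⟨_, _, _, IsNF_exists hk hq⟩
        have hbcp := bc_NF hk hnfp
        have hbcq := bc_NF hk hnfq
        have hae : a ≤ e := hnfq.2.2.1 a (le_trans hnfp.2.1 (le_of_lt hpq))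
        rcases lt_or_eq_of_le hae with hlt | heq
        · have hp3 : bc k p < A (bc k a + 1) (k+1) 0 :=
            (IH (N-1) (by omega)).2.1 p a b l (by omega) hnfp
          have he_lt : e < q := IsNF_a_lt hk hnfq
          have hbce : bc k a < bc k e := (IH (N-1) (by omega)).1 a e (by omega) hlt
          calc bc k p < A (bc k a + 1) (k+1) 0 := hp3
            _ ≤ A (bc k e) (k+1) 0 := A_mono_a (by omega) (by omega) 0
            _ ≤ A (bc k e) (k+1) (bc k f) := A_mono_b (by omega) (Nat.zero_le _)
            _ ≤ bc k q := by omega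
        · subst heq
          have hbf : b ≤ f := hnfq.2.2.2 b (le_trans (by have := hnfp.1; omega) (le_of_lt hpq))
          rcases lt_or_eq_of_le hbf with hbf' | hbf'
          · have h2 : bc k p < A (bc k a) (k+1) (bc k b + 1) := bc_lt_gap hk hnfp
            have hfq : f < q := IsNF_b_lt hk hnfq
            have hbcf : bc k b < bc k f := (IH (N-1) (by omega)).1 b f (by omega) hbf'
            calc bc k p < A (bc k a) (k+1) (bc k b + 1) := h2
              _ ≤ A (bc k a) (k+1) (bc k f) := A_mono_b (by omega) (by omega)
              _ ≤ bc k q := by omega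
          · subst hbf'
            have hlj : l < j0 := by
              have h1 := hnfp.1; have h2 := hnfq.1; omega
            omega
    have L3 : ∀ n a b l, n ≤ N → IsNF k n a b l → bc k n < A (bc k a + 1) (k+1) 0 := by
      intro n a b l hnN hnf
      have hn : 0 < n := by
        have := A_pos (show 1 ≤ k by omega) a b; have := hnf.1; omega
      have h2 : bc k n < A (bc k a) (k+1) (bc k b + 1) := bc_lt_gap hk hnf
      have hn_lt : n < A (a+1) k 0 := IsNF_lt_a (by omega) hnf
      have hiter := A_succ_zero' (show 1 ≤ k by omega) a
      have hb_lt : b < (fun x => A a k x)^[k-1] 0 := by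
        apply A_reflect_b (show 1 ≤ k by omega) (a := a)
        calc A a k b ≤ n := by have := hnf.1; omega
          _ < A a k ((fun x => A a k x)^[k-1] 0) := by rw [← hiter]; exact hn_lt
      have haN : a < n := IsNF_a_lt hk hnf
      have hbN : b < n := IsNF_b_lt hk hnf
      have hL4 := (IH (N-1) (by omega)).2.2 b a (k-1) (by omega) (by omega) (by omega) hb_lt
      have hk1 : k - 1 + 1 = k := by omega
      rw [hk1] at hL4
      calc bc k n < A (bc k a) (k+1) (bc k b + 1) := h2
        _ ≤ A (bc k a) (k+1) ((fun x => A (bc k a) (k+1) x)^[k] 0) :=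
            A_mono_b (by omega) (by omega)
        _ = (fun x => A (bc k a) (k+1) x)^[k+1] 0 := (A_iter_succ _ _ _ _).symm
        _ = A (bc k a + 1) (k+1) 0 := (A_succ_zero _ _).symm
    have L4 : ∀ j d c, d ≤ N → c ≤ N → j + 1 ≤ k → d < (fun x => A c k x)^[j] 0 →
        bc k d < (fun x => A (bc k c) (k+1) x)^[j+1] 0 := by
      intro j
      induction j using Nat.strong_induction_on with
      | _ j IHj =>
        intro d c hdN hcN hjk hd
        rcases Nat.eq_zero_or_pos d with hd0 | hd0
        · subst hd0
          rw [bc_zero, A_iter_succ]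
          exact A_pos (by omega) _ _
        · obtain ⟨e, f, i, hnfd⟩ : ∃ e f i, IsNF k d e f i := ⟨_, _, _, IsNF_exists hk hd0⟩
          rcases Nat.lt_trichotomy e c with hec | hec | hec
          · have h1 : bc k d < A (bc k e + 1) (k+1) 0 := L3 d e f i hdN hnfd
            have he_lt : e < d := IsNF_a_lt hk hnfd
            have h2 : bc k e < bc k c := mono e c hcN hec
            calc bc k d < A (bc k e + 1) (k+1) 0 := h1
              _ ≤ A (bc k c) (k+1) 0 := A_mono_a (by omega) (by omega) 0
              _ ≤ A (bc k c) (k+1) ((fun x => A (bc k c) (k+1) x)^[j] 0) :=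
                  A_mono_b (by omega) (Nat.zero_le _)
              _ = (fun x => A (bc k c) (k+1) x)^[j+1] 0 := (A_iter_succ _ _ _ _).symm
          · subst hec
            have hj1 : 1 ≤ j := by
              rcases Nat.eq_zero_or_pos j with hj0 | hj0
              · subst hj0; simp at hd
              · exact hj0
            obtain ⟨j', rfl⟩ : ∃ j', j = j' + 1 := ⟨j - 1, by omega⟩
            have hAe : A e k f ≤ d := by have := hnfd.1; omega
            have hf_lt : f < (fun x => A e k x)^[j'] 0 := by
              apply A_reflect_b (show 1 ≤ k by omega) (a := e)
              calc A e k f ≤ d := hAe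
                _ < (fun x => A e k x)^[j'+1] 0 := hd
                _ = A e k ((fun x => A e k x)^[j'] 0) := A_iter_succ _ _ _ _
            have hfd : f < d := IsNF_b_lt hk hnfd
            have hL4f := IHj j' (by omega) f e (by omega) hcN (by omega) hf_lt
            have h2 : bc k d < A (bc k e) (k+1) (bc k f + 1) := bc_lt_gap hk hnfd
            calc bc k d < A (bc k e) (k+1) (bc k f + 1) := h2
              _ ≤ A (bc k e) (k+1) ((fun x => A (bc k e) (k+1) x)^[j'+1] 0) :=
                  A_mono_b (by omega) (by omega)
              _ = (fun x => A (bc k e) (k+1) x)^[j'+1+1] 0 := (A_iter_succ _ _ _ _).symm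
          · exfalso
            have h1 : A e k 0 ≤ d := hnfd.2.1
            have h3 : (fun x => A c k x)^[j] 0 ≤ (fun x => A c k x)^[k] 0 :=
              iter_count_mono (lt_A (show 1 ≤ k by omega) c) (by omega) 0
            have h4 : (fun x => A c k x)^[k] 0 = A (c+1) k 0 := (A_succ_zero c k).symm
            have h5 : A (c+1) k 0 ≤ A e k 0 := A_mono_a (show 1 ≤ k by omega) (by omega) 0
            omega
    exact ⟨mono, L3, fun d c j => L4 j d c⟩

theorem bc_mono (hk : 2 ≤ k) {p q : ℕ} (h : p < q) : bc k p < bc k q :=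
  (master hk q).1 p q (le_refl q) h

theorem bc_L3 (hk : 2 ≤ k) {n a b l : ℕ} (h : IsNF k n a b l) :
    bc k n < A (bc k a + 1) (k+1) 0 :=
  (master hk n).2.1 n a b l (le_refl n) h

/-- base change preserves normal forms. -/
theorem bc_IsNF (hk : 2 ≤ k) {n a b l : ℕ} (h : IsNF k n a b l) :
    IsNF (k+1) (bc k n) (bc k a) (bc k b) l := by
  have hbcn := bc_NF hk h
  refine ⟨hbcn, ?_, ?_, ?_⟩
  · have := A_mono_b (show 1 ≤ k+1 by omega) (a := bc k a) (Nat.zero_le (bc k b))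
    omega
  · intro a'' ha''
    by_contra hc
    have h1 : A (bc k a + 1) (k+1) 0 ≤ A a'' (k+1) 0 :=
      A_mono_a (by omega) (by omega) 0
    have h2 := bc_L3 hk h
    omega
  · intro b'' hb''
    have h1 := bc_lt_gap hk h
    have h2 : A (bc k a) (k+1) b'' < A (bc k a) (k+1) (bc k b + 1) := by omega
    have := A_reflect_b (show 1 ≤ k+1 by omega) h2
    omega

/-- The graph of the hereditary base change operation `m ↦ m[k←k+1]`. -/
inductive BC (k : ℕ) : ℕ → ℕ → Prop
  | zero : BC k 0 0
  | step {a b l a' b'} :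
      IsNF k (A a k b + l) a b l → BC k a a' → BC k b b' →
      BC k (A a k b + l) (A a' (k+1) b' + l)

theorem BC_eq (hk : 2 ≤ k) {n n' : ℕ} (h : BC k n n') : n' = bc k n := by
  induction h with
  | zero => rw [bc_zero]
  | step hnf _ _ iha ihb =>
    rw [bc_NF hk hnf, ← iha, ← ihb]

open Ordinal in
/-- a cut-down two-variable Veblen function. -/
noncomputable def vb (o : Ordinal.{0}) : Ordinal.{0} → Ordinal.{0} :=
  if o = 0 then fun b => omega0 ^ b
  else derivFamily fun a : Set.Iio o => vb a.1
  termination_by o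
  decreasing_by exact a.2

open Ordinal

theorem vb_zero_eq (b : Ordinal) : vb 0 b = omega0 ^ b := by
  rw [vb]; simp

theorem vb_pos_eq {o : Ordinal} (h : o ≠ 0) :
    vb o = derivFamily fun a : Set.Iio o => vb a.1 := by
  rw [vb]; simp [h]

theorem isNormal_vb (o : Ordinal) : Order.IsNormal (vb o) := by
  rcases eq_or_ne o 0 with h | h
  · subst h
    have : vb 0 = fun b => omega0 ^ b := by rw [vb]; simp
    rw [this]
    exact isNormal_opow one_lt_omega0
  · rw [vb_pos_eq h]
    exact isNormal_derivFamily _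

theorem vb_fp {a o : Ordinal} (h : a < o) (x : Ordinal) : vb a (vb o x) = vb o x := by
  have ho : o ≠ 0 := by
    intro h0; subst h0; exact absurd h not_lt_zero
  rw [vb_pos_eq ho]
  exact derivFamily_fp (i := (⟨a, h⟩ : Set.Iio o)) (isNormal_vb a) x

theorem vb_mono_left {a o : Ordinal} (h : a ≤ o) (x : Ordinal) : vb a x ≤ vb o x := by
  rcases lt_or_eq_of_le h with h | h
  · calc vb a x ≤ vb a (vb o x) := (isNormal_vb a).monotone (isNormal_vb o).strictMono.le_apply
      _ = vb o x := vb_fp h x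
  · subst h; exact le_refl _

theorem vb_pos (o x : Ordinal) : 0 < vb o x := by
  have h1 : (1:Ordinal) = vb 0 0 := by rw [vb_zero_eq]; simp
  calc (0:Ordinal) < 1 := zero_lt_one
    _ = vb 0 0 := h1
    _ ≤ vb o 0 := vb_mono_left (zero_le : 0 ≤ o) 0
    _ ≤ vb o x := (isNormal_vb o).monotone (zero_le : 0 ≤ x)

theorem vb_principal (o x : Ordinal) : Principal (· + ·) (vb o x) := by
  rcases eq_or_ne o 0 with h | h
  · subst h; rw [vb_zero_eq]; exact principal_add_omega0_opow x
  · have h1 : vb 0 (vb o x) = vb o x := vb_fp (pos_iff_ne_zero.mpr h) x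
    rw [vb_zero_eq] at h1
    rw [← h1]
    exact principal_add_omega0_opow _

theorem omega0_le_vb {o x : Ordinal} (h : 1 ≤ x ∨ o ≠ 0) : omega0 ≤ vb o x := by
  rcases h with h | h
  · calc omega0 = vb 0 1 := by rw [vb_zero_eq, opow_one]
      _ ≤ vb 0 x := (isNormal_vb 0).monotone h
      _ ≤ vb o x := vb_mono_left (zero_le : 0 ≤ o) x
  · have h1 : vb 0 (vb o x) = vb o x := vb_fp (pos_iff_ne_zero.mpr h) x
    rw [vb_zero_eq] at h1
    calc omega0 = omega0 ^ (1:Ordinal) := (opow_one _).symm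
      _ ≤ omega0 ^ (vb o x) := by
          apply (isNormal_opow one_lt_omega0).monotone
          exact Order.one_le_iff_pos.mpr (vb_pos o x)
      _ = vb o x := h1

theorem vb_lt_right {o x y : Ordinal} (h : x < y) (n : ℕ) : vb o x + n < vb o y := by
  have h1 : x + 1 ≤ y := Order.add_one_le_of_lt h
  have h2 : vb o (x+1) ≤ vb o y := (isNormal_vb o).monotone h1
  have h3 : vb o x < vb o (x+1) := (isNormal_vb o).strictMono (lt_add_one x)
  have h4 : (n : Ordinal) < vb o (x+1) :=
    lt_of_lt_of_le (nat_lt_omega0 n) (omega0_le_vb (Or.inl (by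
      calc (1:Ordinal) ≤ x + 1 := le_add_of_nonneg_left (zero_le : 0 ≤ x)
      )))
  exact lt_of_lt_of_le (vb_principal o (x+1) h3 h4) h2

theorem vb_lt_left {o o' x y : Ordinal} (h : o < o') (hx : x < vb o' y) (n : ℕ) :
    vb o x + n < vb o' y := by
  have h1 : vb o x < vb o' y := by
    calc vb o x < vb o (vb o' y) := (isNormal_vb o).strictMono hx
      _ = vb o' y := vb_fp h y
  have h2 : (n : Ordinal) < vb o' y :=
    lt_of_lt_of_le (nat_lt_omega0 n) (omega0_le_vb (Or.inr (by
      intro h0; subst h0; exact absurd h not_lt_zero)))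
  exact vb_principal o' y h1 h2

/-- the ordinal assigned to `m` via its hereditary `k`-normal form. -/
noncomputable def Od (k : ℕ) : ℕ → Ordinal
  | 0 => 0
  | (m+1) => vb (Od k (aOf k (m+1))) (Od k (bOf k (m+1))) + (lOf k (m+1) : ℕ)
  decreasing_by
  · have : aOf k (m+1) ≤ m := Nat.findGreatest_le _
    omega
  · have : bOf k (m+1) ≤ m := Nat.findGreatest_le _
    omega

theorem Od_zero (k : ℕ) : Od k 0 = 0 := by rw [Od]

theorem Od_def {k m : ℕ} (hm : 0 < m) :
    Od k m = vb (Od k (aOf k m)) (Od k (bOf k m)) + (lOf k m : ℕ) := by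
  cases m with
  | zero => omega
  | succ m => rw [Od]

theorem Od_NF (hk : 2 ≤ k) {m a b l : ℕ} (h : IsNF k m a b l) :
    Od k m = vb (Od k a) (Od k b) + (l : ℕ) := by
  have hm : 0 < m := lt_of_lt_of_le (A_pos (show 1 ≤ k by omega) a b)
    (le_trans (Nat.le_add_right _ _) h.1.ge)
  obtain ⟨h1, h2, h3⟩ := IsNF_comp hk h
  rw [Od_def hm, h1, h2, h3]

theorem Od_pos (hk : 2 ≤ k) {m : ℕ} (hm : 0 < m) : 0 < Od k m := by
  rw [Od_def hm]
  exact lt_of_lt_of_le (vb_pos _ _) (le_self_add)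

/-- `Od k` is strictly monotone. -/
theorem Od_mono (hk : 2 ≤ k) : ∀ q p : ℕ, p < q → Od k p < Od k q := by
  intro q
  induction q using Nat.strong_induction_on with
  | _ q IHq =>
    intro p
    induction p using Nat.strong_induction_on with
    | _ p IHp =>
      intro hpq
      have hq : 0 < q := by omega
      rcases Nat.eq_zero_or_pos p with hp | hp
      · subst hp
        rw [Od_zero]
        exact Od_pos hk hq
      · obtain ⟨a, b, l, hnfp⟩ : ∃ a b l, IsNF k p a b l := ⟨_, _, _, IsNF_exists hk hp⟩
        obtain ⟨e, f, j0, hnfq⟩ : ∃ e f j0, IsNF k q e f j0 := ⟨_, _, _, IsNF_exists hk hq⟩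
        have hOp := Od_NF hk hnfp
        have hOq := Od_NF hk hnfq
        have hae : a ≤ e := hnfq.2.2.1 a (le_trans hnfp.2.1 (le_of_lt hpq))
        have he_lt : e < q := IsNF_a_lt hk hnfq
        have hf_lt : f < q := IsNF_b_lt hk hnfq
        rcases lt_or_eq_of_le hae with hlt | heq
        · -- a < e
          have hbp : b < p := IsNF_b_lt hk hnfp
          have hbAval : b < A e k f := by
            have h1 : p < A (a+1) k 0 := IsNF_lt_a (show 1 ≤ k by omega) hnfp
            have h2 : A (a+1) k 0 ≤ A e k 0 := A_mono_a (show 1 ≤ k by omega) (by omega) 0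
            have h3 : A e k 0 ≤ A e k f := A_mono_b (show 1 ≤ k by omega) (Nat.zero_le f)
            omega
          have hAval_nf : IsNF k (A e k f) e f 0 := IsNF_A (show 1 ≤ k by omega) hnfq
          have hOAval : Od k (A e k f) = vb (Od k e) (Od k f) := by
            have := Od_NF hk hAval_nf
            simpa using this
          have hAval_le : A e k f ≤ q := by have := hnfq.1; omega
          have hOb : Od k b < vb (Od k e) (Od k f) := by
            rcases lt_or_eq_of_le hAval_le with hA | hA
            · rw [← hOAval]; exact IHq (A e k f) hA b hbAval
            · rw [← hOAval, hA]; exact IHp b hbp (by omega)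
          have hOae : Od k a < Od k e := IHq e he_lt a hlt
          calc Od k p = vb (Od k a) (Od k b) + (l:ℕ) := hOp
            _ < vb (Od k e) (Od k f) := vb_lt_left hOae hOb l
            _ ≤ Od k q := by rw [hOq]; exact le_self_add
        · -- a = e
          subst heq
          have hbf : b ≤ f := hnfq.2.2.2 b (le_trans (by have := hnfp.1; omega) (le_of_lt hpq))
          rcases lt_or_eq_of_le hbf with hbf' | hbf'
          · have hOb : Od k b < Od k f := IHq f hf_lt b hbf'
            calc Od k p = vb (Od k a) (Od k b) + (l:ℕ) := hOp
              _ < vb (Od k a) (Od k f) := vb_lt_right hOb l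
              _ ≤ Od k q := by rw [hOq]; exact le_self_add
          · subst hbf'
            have hlj : l < j0 := by
              have h1 := hnfp.1; have h2 := hnfq.1; omega
            rw [hOp, hOq]
            exact add_lt_add_right (by exact_mod_cast hlj) _

/-- base change preserves the assigned ordinal. -/
theorem Od_bc (hk : 2 ≤ k) : ∀ m : ℕ, Od (k+1) (bc k m) = Od k m := by
  intro m
  induction m using Nat.strong_induction_on with
  | _ m IH =>
    rcases Nat.eq_zero_or_pos m with hm | hm
    · subst hm; rw [bc_zero, Od_zero, Od_zero]
    · obtain ⟨a, b, l, hnf⟩ : ∃ a b l, IsNF k m a b l := ⟨_, _, _, IsNF_exists hk hm⟩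
      have hnf' : IsNF (k+1) (bc k m) (bc k a) (bc k b) l := bc_IsNF hk hnf
      have h1 : Od (k+1) (bc k m) = vb (Od (k+1) (bc k a)) (Od (k+1) (bc k b)) + (l:ℕ) :=
        Od_NF (by omega) hnf'
      rw [h1, IH a (IsNF_a_lt hk hnf), IH b (IsNF_b_lt hk hnf), ← Od_NF hk hnf]

/-- The Goodstein process `m_0 = m`, `m_{l+1} = m_l[l+3←l+4] - 1` (and
`m_{l+1} = 0` once `m_l = 0`) always terminates. -/
theorem goodstein_terminates (m : ℕ) (g : ℕ → ℕ) (h0 : g 0 = m)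
    (hstep : ∀ l, (g l = 0 → g (l + 1) = 0) ∧
      (0 < g l → ∃ m', BC (l + 3) (g l) m' ∧ g (l + 1) = m' - 1)) :
    ∃ l, g l = 0 := by
  by_contra hc
  push_neg at hc
  have hpos : ∀ l, 0 < g l := fun l => Nat.pos_of_ne_zero (hc l)
  have key : ∀ l, Od (l + 4) (g (l + 1)) < Od (l + 3) (g l) := by
    intro l
    obtain ⟨m', hBC, hg⟩ := (hstep l).2 (hpos l)
    have hk : 2 ≤ l + 3 := by omega
    have hm' : m' = bc (l + 3) (g l) := BC_eq hk hBC
    have hm'pos : 0 < m' := by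
      rw [hm']
      exact lt_of_lt_of_le (hpos l) (bc_le hk _)
    have h1 : Od (l + 4) (g (l + 1)) < Od (l + 4) m' := by
      rw [hg]
      exact Od_mono (by omega) m' (m' - 1) (by omega)
    have h2 : Od (l + 4) m' = Od (l + 3) (g l) := by
      rw [hm']
      exact Od_bc hk (g l)
    rw [← h2]; exact h1
  set F : ℕ → Ordinal := fun l => Od (l + 3) (g l) with hF
  have keyF : ∀ l, F (l + 1) < F l := by
    intro l
    have : l + 1 + 3 = l + 4 := by omega
    simp only [hF, this]
    exact key l
  obtain ⟨x, ⟨l, rfl⟩, hmin⟩ := Ordinal.lt_wf.has_min (Set.range F) ⟨F 0, 0, rfl⟩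
  exact hmin (F (l + 1)) ⟨l + 1, rfl⟩ (keyF l)
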